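/- Let r > 1 and define G(z) = r·(1 - (1 - 1/z)^{1/r}) for z in the upper half-plane, using the principal branch of the power w^{1/r} on ℂ ∖ (-∞, 0]. Then for every x ∈ (0,1), the limit as y → 0⁺ of Im G(x + iy) equals -r·sin(π/r)·((1-x)/x)^{1/r}. -/

import Mathlib

open Real Complex Filter

/-- for `r > 1` and `G(z) = r·(1 - (1 - 1/z)^{1/r})` (principal branch
of the power, which agrees with the branch with `Im log ∈ (-π,π)` on `ℂ ∖ (-∞,0]`),
for every `x ∈ (0,1)` the boundary value of `Im G` is
`-r·sin(π/r)·((1-x)/x)^{1/r}`. -/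
theorem stmt3 (r : ℝ) (hr : 1 < r)
    (G : ℂ → ℂ)
    (hG : ∀ z : ℂ, G z = (r : ℂ) * (1 - (1 - 1/z) ^ ((1/r : ℂ))))
    (x : ℝ) (hx0 : 0 < x) (hx1 : x < 1) :
    Tendsto (fun y : ℝ => (G (x + y * Complex.I)).im)
      (nhdsWithin 0 (Set.Ioi 0))
      (nhds (-r * Real.sin (π / r) * ((1 - x)/x) ^ (1/r : ℝ))) := by
  have hxC : (x : ℂ) ≠ 0 := by exact_mod_cast hx0.ne'
  have hinv : 1 < 1 / x := by rw [lt_div_iff₀ hx0]; linarith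
  set a : ℝ := (1 - x) / x with ha
  clear_value a
  have ha0 : 0 < a := by rw [ha]; exact div_pos (by linarith) hx0
  set w₀ : ℂ := 1 - 1/(x : ℂ) with hw₀
  have hw₀eq : w₀ = ((1 - 1/x : ℝ) : ℂ) := by push_cast [hw₀]; ring
  have hw₀re : w₀.re < 0 := by rw [hw₀eq, Complex.ofReal_re]; linarith
  have hw₀im : w₀.im = 0 := by rw [hw₀eq, Complex.ofReal_im]
  have habs : ‖w₀‖ = a := by
    rw [hw₀eq, Complex.norm_real, Real.norm_eq_abs, abs_of_neg (by linarith), ha]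
    field_simp
    ring
  set f : ℝ → ℂ := fun y => 1 - 1/((x : ℂ) + y * Complex.I) with hf
  have hzne : ∀ y : ℝ, 0 < y → ((x : ℂ) + y * Complex.I) ≠ 0 := by
    intro y hy0 h
    have := congrArg Complex.im h
    simp at this
    exact hy0.ne' this
  have key : ∀ y : ℝ, (f y).im = y / Complex.normSq ((x : ℂ) + y * Complex.I) := by
    intro y
    simp [hf, Complex.div_im, neg_div, neg_neg]
  have hfim : ∀ y ∈ Set.Ioi (0:ℝ), 0 ≤ (f y).im := by
    intro y hy
    have hy0 : (0:ℝ) < y := hy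
    rw [key]
    exact div_nonneg hy0.le (Complex.normSq_nonneg _)
  have hftend : Tendsto f (nhdsWithin 0 (Set.Ioi 0)) (nhdsWithin w₀ {z : ℂ | 0 ≤ z.im}) := by
    apply tendsto_nhdsWithin_of_tendsto_nhds_of_eventually_within
    · have hc : ContinuousAt f 0 := by
        apply ContinuousAt.sub continuousAt_const
        apply ContinuousAt.div continuousAt_const
        · fun_prop
        · simpa using hxC
      have : f 0 = w₀ := by simp [hf, hw₀]
      simpa [this] using hc.tendsto.mono_left nhdsWithin_le_nhds
    · exact eventually_nhdsWithin_of_forall hfim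
  have hlog : Tendsto (fun y => Complex.log (f y)) (nhdsWithin 0 (Set.Ioi 0))
      (nhds (Real.log a + π * Complex.I)) := by
    have := (Complex.tendsto_log_nhdsWithin_im_nonneg_of_re_neg_of_im_zero hw₀re hw₀im).comp hftend
    rwa [habs] at this
  set E : ℂ := Complex.exp ((1/r : ℂ) * (Real.log a + π * Complex.I)) with hE
  have hcpow : Tendsto (fun y => (f y) ^ ((1/r : ℂ))) (nhdsWithin 0 (Set.Ioi 0)) (nhds E) := by
    have hne : ∀ᶠ y in nhdsWithin 0 (Set.Ioi 0), f y ≠ 0 := by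
      filter_upwards [eventually_mem_nhdsWithin] with y hy h0
      have hy0 : (0:ℝ) < y := hy
      have hpos : 0 < (f y).im := by
        rw [key]
        exact div_pos hy0 (Complex.normSq_pos.mpr (hzne y hy0))
      rw [h0] at hpos
      simp at hpos
    have heq : ∀ᶠ y in nhdsWithin 0 (Set.Ioi 0),
        (f y) ^ ((1/r : ℂ)) = Complex.exp ((1/r : ℂ) * Complex.log (f y)) := by
      filter_upwards [hne] with y hy
      rw [Complex.cpow_def_of_ne_zero hy, mul_comm]
    rw [tendsto_congr' heq]
    exact (Complex.continuous_exp.continuousAt.tendsto.comp (tendsto_const_nhds.mul hlog))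
  have hGlim : Tendsto (fun y : ℝ => G ((x : ℂ) + y * Complex.I)) (nhdsWithin 0 (Set.Ioi 0))
      (nhds ((r : ℂ) * (1 - E))) := by
    have : (fun y : ℝ => G ((x : ℂ) + y * Complex.I))
        = fun y => (r : ℂ) * (1 - (f y) ^ ((1/r : ℂ))) := by
      funext y; rw [hG]
    rw [this]
    exact tendsto_const_nhds.mul (tendsto_const_nhds.sub hcpow)
  have him := (Complex.continuous_im.continuousAt.tendsto.comp hGlim)
  have hval : ((r : ℂ) * (1 - E)).im = -r * Real.sin (π / r) * a ^ (1/r : ℝ) := by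
    have hE' : E = Complex.exp (((Real.log a / r : ℝ) : ℂ) + ((π / r : ℝ) : ℂ) * Complex.I) := by
      rw [hE]; push_cast; ring_nf
    have hEim : E.im = a ^ (1/r : ℝ) * Real.sin (π / r) := by
      rw [hE', Complex.exp_im]
      simp only [Complex.add_re, Complex.ofReal_re, Complex.mul_re, Complex.I_re,
        Complex.ofReal_im, Complex.I_im, Complex.add_im, Complex.mul_im, mul_zero, mul_one,
        zero_mul, sub_zero, add_zero, zero_add]
      rw [Real.rpow_def_of_pos ha0, one_div, ← div_eq_mul_inv]
    simp only [Complex.mul_im, Complex.ofReal_re, Complex.ofReal_im, Complex.sub_im,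
      Complex.one_im, Complex.sub_re, Complex.one_re, zero_mul, add_zero, zero_sub]
    rw [hEim]; ring
  rw [← hval]
  exact him
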